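/- Let y ∈ Σ₂^{n-1} be a binary word with runs of lengths r₁, ..., r_t. For each word x ∈ Σ₂ⁿ obtained from y by prolonging the i-th run by one symbol, Emb(x; y) = r_i + 1; for each x obtained from y by inserting a symbol that creates a new run of length one, Emb(x; y) = 1; and every x ∈ Σ₂ⁿ that is a supersequence of y is of one of these two forms. Consequently max over x ∈ Σ₂ⁿ of Emb(x; y) = 1 + max_i r_i, achieved by prolonging a run of maximal length. -/

import Mathlib

/-- The embedding number `Emb(x; y)`: the number of index subsets `I` of `[|x|]` with
`x_I = y`, i.e. the number of ways `y` occurs as a subsequence of `x`. -/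
def Emb (x y : List Bool) : ℕ :=
  (Finset.univ.filter (fun I : Finset (Fin x.length) =>
    (I.sort (· ≤ ·)).map x.get = y)).card

/-- The length of the longest run (maximal block of equal consecutive symbols) of a word. -/
def maxRun (l : List Bool) : ℕ := ((l.splitBy (· == ·)).map List.length).foldr max 0

/-- The number of runs of a word. -/
def numRuns (l : List Bool) : ℕ := (l.splitBy (· == ·)).length

open List Finset

private lemma map_eraseIdx' {n : ℕ} (f : Fin n → Bool) (l : List (Fin n)) (i : ℕ) :
    (l.eraseIdx i).map f = (l.map f).eraseIdx i := by
  simp [List.eraseIdx_eq_take_drop_succ, List.map_take, List.map_drop]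

private lemma sort_compl_singleton {n : ℕ} (i : Fin n) :
    (({i}ᶜ : Finset (Fin n)).sort (· ≤ ·)) = (List.finRange n).eraseIdx i.1 := by
  refine (fun hp h1 h2 => List.Perm.eq_of_pairwise' (r := (· ≤ ·)) h1 h2 hp) ?_ ?_ ?_
  · rw [List.perm_ext_iff_of_nodup (Finset.sort_nodup _ _)
      ((List.eraseIdx_sublist _ _).nodup (List.nodup_finRange n))]
    intro a
    rw [Finset.mem_sort]
    have : (List.finRange n).eraseIdx i.1 ~ (List.finRange n).erase ((List.finRange n)[i.1]) :=
      (List.erase_getElem (by simp)).symm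
    rw [this.mem_iff, (List.nodup_finRange n).mem_erase_iff]
    simp [List.getElem_finRange]
  · exact Finset.pairwise_sort _ _
  · exact List.Pairwise.sublist (List.eraseIdx_sublist _ _) (List.pairwise_le_finRange n)

private lemma map_get_sort_compl (x : List Bool) (i : Fin x.length) :
    ((({i}ᶜ : Finset (Fin x.length)).sort (· ≤ ·)).map x.get) = x.eraseIdx i.1 := by
  rw [sort_compl_singleton, map_eraseIdx', List.map_get_finRange]

private lemma emb_eq_card_del (x y : List Bool) (hlen : x.length = y.length + 1) :
    Emb x y = (Finset.univ.filter (fun i : Fin x.length => x.eraseIdx i.1 = y)).card := by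
  rw [Emb]
  refine (Finset.card_bij (fun i _ => ({i}ᶜ : Finset (Fin x.length))) ?_ ?_ ?_).symm
  · intro i hi
    simp only [Finset.mem_filter, Finset.mem_univ, true_and] at hi ⊢
    rw [map_get_sort_compl]; exact hi
  · intro i _ j _ hij
    have := congrArg (·ᶜ) hij
    simpa using this
  · intro I hI
    simp only [Finset.mem_filter, Finset.mem_univ, true_and] at hI
    have hcard : I.card = y.length := by
      have := congrArg List.length hI
      simpa using this
    have hc : Iᶜ.card = 1 := by
      rw [Finset.card_compl, hcard]
      simp [hlen]
    obtain ⟨i, hi⟩ := Finset.card_eq_one.1 hc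
    refine ⟨i, ?_, ?_⟩
    · simp only [Finset.mem_filter, Finset.mem_univ, true_and]
      rw [← map_get_sort_compl x i, ← hi, compl_compl]
      exact hI
    · show ({i}ᶜ : Finset _) = I
      rw [← hi, compl_compl]

private lemma between_eq {x : List Bool} {j k m : ℕ}
    (h : x.eraseIdx j = x.eraseIdx k) (hj : j ≤ m) (hk : m < k) : x[m]? = x[m + 1]? := by
  have h1 := congrArg (fun l => l[m]?) h
  simp only [List.getElem?_eraseIdx] at h1
  rw [if_neg (by omega), if_pos hk] at h1
  exact h1.symm

private lemma erase_middle (A B : List Bool) (h : Bool) (r j : ℕ)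
    (h1 : A.length ≤ j) (h2 : j ≤ A.length + r) :
    (A ++ replicate (r + 1) h ++ B).eraseIdx j = A ++ replicate r h ++ B := by
  rw [List.append_assoc, List.eraseIdx_append_of_length_le h1,
    List.eraseIdx_append_of_lt_length (by simp; omega),
    List.eraseIdx_replicate, if_pos (by omega), List.append_assoc]
  simp

private lemma card_del (A B : List Bool) (h : Bool) (r : ℕ)
    (hA : A.getLast? ≠ some h) (hB : B.head? ≠ some h) :
    (Finset.univ.filter (fun i : Fin (A ++ replicate (r + 1) h ++ B).length =>
      (A ++ replicate (r + 1) h ++ B).eraseIdx i.1 = A ++ replicate r h ++ B)).card = r + 1 := by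
  set x := A ++ replicate (r + 1) h ++ B with hx
  have hlen : x.length = A.length + (r + 1) + B.length := by simp [hx]; omega
  have hlo : A.length < x.length := by omega
  have hhi : A.length + r < x.length := by omega
  have hmid : ∀ t, t ≤ r → x[A.length + t]? = some h := by
    intro t ht
    rw [hx, List.append_assoc, List.getElem?_append_right (by omega),
      List.getElem?_append_left (by simp; omega)]
    simp [List.getElem?_replicate]; omega
  have key : (Finset.univ.filter (fun i : Fin x.length =>
      x.eraseIdx i.1 = A ++ replicate r h ++ B)) =
      Finset.Icc ⟨A.length, hlo⟩ ⟨A.length + r, hhi⟩ := by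
    ext i
    simp only [Finset.mem_filter, Finset.mem_univ, true_and, Finset.mem_Icc]
    constructor
    · intro he
      constructor
      · by_contra hc
        rw [Fin.le_def, not_le] at hc
        simp only [Fin.val_mk] at hc
        have h0 : x.eraseIdx i.1 = x.eraseIdx A.length := by
          rw [he, erase_middle A B h r A.length le_rfl (by omega)]
        have := between_eq h0 (m := A.length - 1) (by omega) (by omega)
        rw [show A.length - 1 + 1 = A.length by omega] at this
        have hlast : x[A.length - 1]? = A.getLast? := by
          rw [hx, List.append_assoc, List.getElem?_append_left (by omega),
            List.getLast?_eq_getElem?]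
        have h5 := hmid 0 (Nat.zero_le r)
        rw [Nat.add_zero] at h5
        rw [hlast, h5] at this
        exact hA this
      · by_contra hc
        rw [Fin.le_def, not_le] at hc
        simp only [Fin.val_mk] at hc
        have h0 : x.eraseIdx (A.length + r) = x.eraseIdx i.1 := by
          rw [he, erase_middle A B h r (A.length + r) (by omega) le_rfl]
        have := between_eq h0 (m := A.length + r) le_rfl hc
        have hhead : x[A.length + r + 1]? = B.head? := by
          have h6 : A.length + r + 1 - A.length - (replicate (r + 1) h).length = 0 := by
            simp; omega
          rw [hx, List.append_assoc, List.getElem?_append_right (by omega),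
            List.getElem?_append_right (by simp; omega), h6, List.head?_eq_getElem?]
        rw [hhead, hmid r le_rfl] at this
        exact hB this.symm
    · intro ⟨hl, hr'⟩
      rw [Fin.le_def] at hl hr'
      simp only [Fin.val_mk] at hl hr'
      exact erase_middle A B h r i.1 hl hr'
  rw [key, Fin.card_Icc]
  simp
  omega

private lemma emb_pattern (A B : List Bool) (h : Bool) (r : ℕ)
    (hA : A.getLast? ≠ some h) (hB : B.head? ≠ some h) :
    Emb (A ++ replicate (r + 1) h ++ B) (A ++ replicate r h ++ B) = r + 1 := by
  rw [emb_eq_card_del _ _ (by simp; omega)]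
  exact card_del A B h r hA hB

private lemma headI_eq_head' {l : List Bool} (h : l ≠ []) : l.headI = l.head h := by
  cases l with
  | nil => exact absurd rfl h
  | cons a t => rfl

private lemma chain'_const' : ∀ (l : List Bool), l.Chain' (fun a b => a == b) →
    l = replicate l.length l.headI
  | [], _ => rfl
  | [a], _ => rfl
  | a :: b :: t, h => by
    simp only [List.Chain', List.isChain_cons_cons] at h
    obtain ⟨h1, h2⟩ := h
    have hab : a = b := by simpa using h1
    subst hab
    have ih := chain'_const' (a :: t) h2
    rw [List.length_cons, List.replicate_succ]
    exact congrArg (a :: ·) ih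

private lemma run_decomp' (R : List (List Bool)) (i : ℕ) (hi : i < R.length) :
    R.flatten = (R.take i).flatten ++ R[i] ++ (R.drop (i + 1)).flatten := by
  conv_lhs => rw [← List.take_append_drop i R]
  rw [List.flatten_append, List.drop_eq_getElem_cons hi, List.flatten_cons, ← List.append_assoc]

private lemma flatten_set_decomp (R : List (List Bool)) (i : ℕ) (hi : i < R.length)
    (v : List Bool) :
    (R.set i v).flatten = (R.take i).flatten ++ v ++ (R.drop (i + 1)).flatten := by
  rw [List.set_eq_take_append_cons_drop, if_pos hi, List.flatten_append, List.flatten_cons,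
    ← List.append_assoc]

private lemma le_foldr_max {a : ℕ} : ∀ {l : List ℕ}, a ∈ l → a ≤ l.foldr max 0
  | [], h => by simp at h
  | b :: t, h => by
    rcases List.mem_cons.1 h with rfl | h
    · exact le_max_left _ _
    · exact le_trans (le_foldr_max h) (le_max_right _ _)

private lemma foldr_max_mem : ∀ (l : List ℕ), l ≠ [] → l.foldr max 0 ∈ l
  | [], h => absurd rfl h
  | [a], _ => by simp
  | a :: b :: t, _ => by
    rcases max_choice a ((b :: t).foldr max 0) with h | h
    · rw [List.foldr_cons, h]; exact List.mem_cons_self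
    · rw [List.foldr_cons, h]; exact List.mem_cons_of_mem _ (foldr_max_mem (b :: t) (by simp))

private lemma sublist_succ : ∀ {y x : List Bool}, y <+ x → x.length = y.length + 1 →
    ∃ k b, x = y.take k ++ b :: y.drop k := by
  intro y x h
  induction h with
  | slnil => intro hl; simp at hl
  | cons a h ih =>
    intro hl
    have : _ = _ := h.eq_of_length (by simp at hl; omega)
    exact ⟨0, a, by rw [this]; simp⟩
  | cons_cons a h ih =>
    intro hl
    obtain ⟨k, b, he⟩ := ih (by simpa using hl)
    exact ⟨k + 1, b, by simp [he]⟩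

private lemma boundary_last (R : List (List Bool)) (hne : ∀ g ∈ R, g ≠ [])
    (hch : R.Chain' fun a b => ∃ ha hb, (a.getLast ha == b.head hb) = false)
    (i : ℕ) (hi : i < R.length) :
    ((R.take i).flatten).getLast? ≠ some (R[i].headI) := by
  cases i with
  | zero => simp
  | succ j =>
    have hj : j < R.length := by omega
    have hnej : R[j] ≠ [] := hne _ (List.getElem_mem hj)
    have hnei : R[j + 1] ≠ [] := hne _ (List.getElem_mem hi)
    have htake : R.take (j + 1) = R.take j ++ [R[j]] := by
      rw [List.take_succ, List.getElem?_eq_getElem hj]; rfl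
    rw [htake, List.flatten_append, List.getLast?_append]
    have : ([R[j]] : List (List Bool)).flatten = R[j] := by simp
    rw [this, List.getLast?_eq_getLast hnej]
    obtain ⟨ha, hb, hfalse⟩ := List.isChain_iff_getElem.1 hch j (by omega)
    simp only [Option.some_or]
    intro hcon
    have h1 : R[j].getLast hnej = R[j + 1].headI := by
      simpa using hcon
    rw [headI_eq_head' hnei] at h1
    exact (beq_eq_false_iff_ne.1 hfalse) (by simpa using h1)

private lemma boundary_head (R : List (List Bool)) (hne : ∀ g ∈ R, g ≠ [])
    (hch : R.Chain' fun a b => ∃ ha hb, (a.getLast ha == b.head hb) = false)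
    (i : ℕ) (hi : i < R.length) (hne' : R[i] ≠ []) :
    ((R.drop (i + 1)).flatten).head? ≠ some (R[i].getLast hne') := by
  by_cases hlast : R.length ≤ i + 1
  · rw [List.drop_eq_nil_of_le hlast]; simp
  · push_neg at hlast
    have hnei : R[i + 1] ≠ [] := hne _ (List.getElem_mem hlast)
    rw [List.drop_eq_getElem_cons hlast, List.flatten_cons, List.head?_append,
      List.head?_eq_head hnei]
    obtain ⟨ha, hb, hfalse⟩ := List.isChain_iff_getElem.1 hch i (by omega)
    simp only [Option.some_or]
    intro hcon
    exact (beq_eq_false_iff_ne.1 hfalse) (by simpa using hcon.symm)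

private lemma runstart (y : List Bool) (k : ℕ) (hk : k < y.length)
    (hstart : k = 0 ∨ y[k - 1]? ≠ y[k]?) :
    ∃ i : Fin (y.splitBy (· == ·)).length,
      (((y.splitBy (· == ·)).take i.1).flatten).length = k := by
  classical
  set R := y.splitBy (· == ·) with hR
  have hflat : R.flatten = y := List.flatten_splitBy _ _
  have hconst : ∀ g ∈ R, g = replicate g.length g.headI := fun g hg =>
    chain'_const' g (List.isChain_of_mem_splitBy hg)
  set f : ℕ → ℕ := fun j => ((R.take j).flatten).length with hf
  have hft : f R.length = y.length := by
    show ((R.take R.length).flatten).length = y.length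
    rw [List.take_length, hflat]
  set i := Nat.findGreatest (fun j => f j ≤ k) R.length with hi
  have hspec : f i ≤ k := Nat.findGreatest_spec (P := fun j => f j ≤ k) (Nat.zero_le _)
    (by show ((R.take 0).flatten).length ≤ k; simp)
  have hile : i ≤ R.length := Nat.findGreatest_le _
  have hilt : i < R.length := by
    rcases Nat.lt_or_ge i R.length with h | h
    · exact h
    · exfalso; have he : i = R.length := le_antisymm hile h
      rw [he, hft] at hspec; omega
  have hfs : f (i + 1) = f i + R[i].length := by
    show ((R.take (i + 1)).flatten).length = ((R.take i).flatten).length + R[i].length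
    rw [List.take_succ, List.getElem?_eq_getElem hilt, Option.toList_some, List.flatten_append]
    simp
  have hmax : ¬ f (i + 1) ≤ k :=
    Nat.findGreatest_is_greatest (P := fun j => f j ≤ k) (n := R.length) (by omega) (by omega)
  rcases eq_or_lt_of_le hspec with heq | hlt
  · exact ⟨⟨i, hilt⟩, heq⟩
  · exfalso
    have hdecomp : y = (R.take i).flatten ++ (R[i] ++ (R.drop (i + 1)).flatten) := by
      rw [← hflat]; rw [run_decomp' R i hilt, List.append_assoc]
    have hrep : R[i] = replicate R[i].length (R[i].headI) := hconst _ (List.getElem_mem hilt)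
    have hfi : ((R.take i).flatten).length = f i := rfl
    have hval : ∀ t, t < R[i].length → y[f i + t]? = some (R[i].headI) := by
      intro t ht
      rw [hdecomp, List.getElem?_append_right (by rw [hfi]; omega),
        show f i + t - ((R.take i).flatten).length = t from by rw [hfi]; omega,
        List.getElem?_append_left ht]
      conv_lhs => rw [hrep]
      rw [List.getElem?_replicate, if_pos (by simpa using ht)]
    have h1 : y[k - 1]? = some (R[i].headI) := by
      have := hval (k - 1 - f i) (by omega)
      rwa [show f i + (k - 1 - f i) = k - 1 from by omega] at this
    have h2 : y[k]? = some (R[i].headI) := by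
      have := hval (k - f i) (by omega)
      rwa [show f i + (k - f i) = k from by omega] at this
    rcases hstart with rfl | hne'
    · omega
    · exact hne' (h1.trans h2.symm)

private lemma part1_gen (R : List (List Bool)) (y : List Bool) (hflat : R.flatten = y)
    (hne : ∀ g ∈ R, g ≠ [])
    (hconst : ∀ g ∈ R, g = replicate g.length g.headI)
    (hch : R.Chain' fun a b => ∃ ha hb, (a.getLast ha == b.head hb) = false)
    (i : ℕ) (hi : i < R.length) :
    Emb ((R.set i (R[i].headI :: R[i])).flatten) y = R[i].length + 1 := by
  have hgne : R[i] ≠ [] := hne _ (List.getElem_mem hi)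
  have hgrep : R[i] = replicate R[i].length R[i].headI := hconst _ (List.getElem_mem hi)
  have hA := boundary_last R hne hch i hi
  have hB0 := boundary_head R hne hch i hi hgne
  have h7 : R[i].getLast? = some R[i].headI := by
    conv_lhs => rw [hgrep]
    rw [List.getLast?_replicate, if_neg (by simpa using hgne)]
  rw [List.getLast?_eq_getLast hgne, Option.some_inj] at h7
  rw [h7] at hB0
  have hx : (R.set i (R[i].headI :: R[i])).flatten
      = (R.take i).flatten ++ replicate (R[i].length + 1) R[i].headI
        ++ (R.drop (i + 1)).flatten := by
    rw [flatten_set_decomp R i hi, List.replicate_succ, ← hgrep]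
  have hy2 : y = (R.take i).flatten ++ replicate R[i].length R[i].headI
      ++ (R.drop (i + 1)).flatten := by
    conv_lhs => rw [← hflat, run_decomp' R i hi]
    rw [← hgrep]
  rw [hx, hy2]
  exact emb_pattern _ _ _ _ hA hB0

theorem emb_one_insertion (y : List Bool) (hy : y ≠ []) :
    (∀ i : Fin (y.splitBy (· == ·)).length,
      Emb (((y.splitBy (· == ·)).set i.1
        (((y.splitBy (· == ·)).get i).headI :: (y.splitBy (· == ·)).get i)).flatten) y
        = ((y.splitBy (· == ·)).get i).length + 1)
    ∧ (∀ x : List Bool, ∀ k : ℕ, ∀ b : Bool,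
        x = y.take k ++ b :: y.drop k →
        (y.take k).getLast? ≠ some b → (y.drop k).head? ≠ some b →
        Emb x y = 1)
    ∧ (∀ x : List Bool, x.length = y.length + 1 → y.Sublist x →
        (∃ i : Fin (y.splitBy (· == ·)).length,
          x = ((y.splitBy (· == ·)).set i.1
            (((y.splitBy (· == ·)).get i).headI :: (y.splitBy (· == ·)).get i)).flatten)
        ∨ (∃ k : ℕ, ∃ b : Bool, x = y.take k ++ b :: y.drop k ∧
            (y.take k).getLast? ≠ some b ∧ (y.drop k).head? ≠ some b))
    ∧ (∀ x : List Bool, x.length = y.length + 1 → Emb x y ≤ maxRun y + 1)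
    ∧ (∃ x : List Bool, x.length = y.length + 1 ∧ Emb x y = maxRun y + 1) := by
  classical
  have hflat : (y.splitBy (· == ·)).flatten = y := List.flatten_splitBy _ _
  have hne : ∀ g ∈ y.splitBy (· == ·), g ≠ [] := fun g hg => List.ne_nil_of_mem_splitBy hg
  have hconst : ∀ g ∈ y.splitBy (· == ·), g = replicate g.length g.headI := fun g hg =>
    chain'_const' g (List.isChain_of_mem_splitBy hg)
  have hch := List.isChain_getLast_head_splitBy (fun a b : Bool => a == b) y
  have P1 : ∀ i : Fin (y.splitBy (· == ·)).length,
      Emb (((y.splitBy (· == ·)).set i.1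
        (((y.splitBy (· == ·)).get i).headI :: (y.splitBy (· == ·)).get i)).flatten) y
        = ((y.splitBy (· == ·)).get i).length + 1 := fun i =>
    part1_gen _ y hflat hne hconst hch i.1 i.2
  have P2 : ∀ x : List Bool, ∀ k : ℕ, ∀ b : Bool,
      x = y.take k ++ b :: y.drop k →
      (y.take k).getLast? ≠ some b → (y.drop k).head? ≠ some b → Emb x y = 1 := by
    intro x k b hx h1 h2
    subst hx
    have := emb_pattern (y.take k) (y.drop k) b 0 h1 h2
    simpa [List.take_append_drop] using this
  have P3 : ∀ x : List Bool, x.length = y.length + 1 → y.Sublist x →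
      (∃ i : Fin (y.splitBy (· == ·)).length,
        x = ((y.splitBy (· == ·)).set i.1
          (((y.splitBy (· == ·)).get i).headI :: (y.splitBy (· == ·)).get i)).flatten)
      ∨ (∃ k : ℕ, ∃ b : Bool, x = y.take k ++ b :: y.drop k ∧
          (y.take k).getLast? ≠ some b ∧ (y.drop k).head? ≠ some b) := by
    intro x hxl hsub
    have hP : ∃ k, ∃ b : Bool, x = y.take k ++ b :: y.drop k := by
      obtain ⟨k, b, he⟩ := sublist_succ hsub hxl
      exact ⟨k, b, he⟩
    set k₀ := Nat.find hP with hk₀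
    obtain ⟨b, hxe⟩ := Nat.find_spec hP
    rw [← hk₀] at hxe
    have hk0le : k₀ ≤ y.length := by
      by_contra hgt
      push_neg at hgt
      have hP' : ∃ b' : Bool, x = y.take y.length ++ b' :: y.drop y.length := by
        refine ⟨b, ?_⟩
        rw [hxe, List.take_of_length_le (by omega), List.drop_eq_nil_of_le (by omega),
          List.take_length, List.drop_length]
      exact absurd (Nat.find_min' hP hP') (by omega)
    have hlast : (y.take k₀).getLast? ≠ some b := by
      intro hcon
      have hk0pos : k₀ ≠ 0 := by intro h0; rw [h0] at hcon; simp at hcon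
      have hl : (y.take k₀).length = k₀ := by rw [List.length_take]; omega
      have hidx : y[k₀ - 1]? = some b := by
        rw [List.getLast?_eq_getElem?, hl, List.getElem?_take, if_pos (by omega)] at hcon
        exact hcon
      have hklt : k₀ - 1 < y.length := by omega
      have hgetb : y[k₀ - 1] = b := by
        rw [List.getElem?_eq_getElem hklt] at hidx
        exact Option.some_inj.1 hidx
      have hP' : ∃ b' : Bool, x = y.take (k₀ - 1) ++ b' :: y.drop (k₀ - 1) := by
        refine ⟨b, ?_⟩
        rw [hxe]
        have ht : y.take k₀ = y.take (k₀ - 1) ++ [b] := by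
          conv_lhs => rw [show k₀ = (k₀ - 1) + 1 by omega]
          rw [List.take_succ, List.getElem?_eq_getElem hklt, hgetb]
          rfl
        have hd : y.drop (k₀ - 1) = b :: y.drop k₀ := by
          rw [List.drop_eq_getElem_cons hklt, hgetb, show k₀ - 1 + 1 = k₀ by omega]
        rw [ht, hd]
        simp
      exact absurd (Nat.find_min' hP hP') (by omega)
    by_cases hhead : (y.drop k₀).head? = some b
    · left
      have hk0lt : k₀ < y.length := by
        rcases eq_or_lt_of_le hk0le with he | hlt
        · exfalso; rw [he, List.drop_length] at hhead; simp at hhead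
        · exact hlt
      have hidx : y[k₀]? = some b := by
        rw [List.head?_eq_getElem?, List.getElem?_drop, Nat.add_zero] at hhead
        exact hhead
      have hstart : k₀ = 0 ∨ y[k₀ - 1]? ≠ y[k₀]? := by
        rcases Nat.eq_zero_or_pos k₀ with h0 | hpos
        · left; exact h0
        · right
          intro hcon
          apply hlast
          have hl : (y.take k₀).length = k₀ := by rw [List.length_take]; omega
          rw [List.getLast?_eq_getElem?, hl, List.getElem?_take, if_pos (by omega), hcon, hidx]
      obtain ⟨i, hlen_i⟩ := runstart y k₀ hk0lt hstart
      refine ⟨i, ?_⟩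
      have hi2 := i.2
      have hdecomp : y = ((y.splitBy (· == ·)).take i.1).flatten
          ++ ((y.splitBy (· == ·))[i.1] ++ ((y.splitBy (· == ·)).drop (i.1 + 1)).flatten) := by
        conv_lhs => rw [← hflat, run_decomp' _ i.1 i.2]
        rw [List.append_assoc]
      have htake : y.take k₀ = ((y.splitBy (· == ·)).take i.1).flatten := by
        conv_lhs => rw [hdecomp]
        rw [← hlen_i, List.take_left]
      have hdrop : y.drop k₀ = (y.splitBy (· == ·))[i.1]
          ++ ((y.splitBy (· == ·)).drop (i.1 + 1)).flatten := by
        conv_lhs => rw [hdecomp]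
        rw [← hlen_i, List.drop_left]
      have hgne : (y.splitBy (· == ·))[i.1] ≠ [] := hne _ (List.getElem_mem i.2)
      have hb : b = (y.splitBy (· == ·))[i.1].headI := by
        rw [hdrop, List.head?_append, List.head?_eq_head hgne] at hhead
        rw [headI_eq_head' hgne]
        have hhead' : some ((y.splitBy (· == ·))[i.1].head hgne) = some b := hhead
        exact (Option.some_inj.1 hhead').symm
      rw [flatten_set_decomp _ i.1 i.2, hxe, htake, hdrop, hb]
      simp [List.append_assoc, List.get_eq_getElem]
    · right
      exact ⟨k₀, b, hxe, hlast, hhead⟩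
  have P4 : ∀ x : List Bool, x.length = y.length + 1 → Emb x y ≤ maxRun y + 1 := by
    intro x hxl
    by_cases hsub : y <+ x
    · rcases P3 x hxl hsub with ⟨i, hx⟩ | ⟨k, b, hx, h1, h2⟩
      · rw [hx, P1 i]
        have hle : ((y.splitBy (· == ·)).get i).length ≤ maxRun y :=
          le_foldr_max (List.mem_map_of_mem (List.get_mem _ i))
        omega
      · rw [P2 x k b hx h1 h2]; omega
    · have h0 : Emb x y = 0 := by
        rw [emb_eq_card_del x y hxl, Finset.card_eq_zero, Finset.filter_eq_empty_iff]
        intro i _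
        intro hcon
        exact hsub (hcon ▸ List.eraseIdx_sublist x i.1)
      omega
  refine ⟨P1, P2, P3, P4, ?_⟩
  have hRne : y.splitBy (· == ·) ≠ [] := by
    intro h0
    apply hy
    rw [← hflat, h0]
    rfl
  have hmem : maxRun y ∈ (y.splitBy (· == ·)).map List.length :=
    foldr_max_mem _ (by simpa using hRne)
  obtain ⟨g, hgmem, hglen⟩ := List.mem_map.1 hmem
  obtain ⟨i, hgi⟩ := List.mem_iff_get.1 hgmem
  refine ⟨((y.splitBy (· == ·)).set i.1
    (((y.splitBy (· == ·)).get i).headI :: (y.splitBy (· == ·)).get i)).flatten, ?_, ?_⟩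
  · rw [flatten_set_decomp _ i.1 i.2]
    conv_rhs => rw [← hflat, run_decomp' _ i.1 i.2]
    simp [List.get_eq_getElem]
    omega
  · rw [P1 i, hgi, hglen]
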